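/- Let a ∈ ℂ³ be a nonzero vector with ‖a‖_∞ ≤ 1. Then there exists a vector v ∈ ℂ³ with ‖v‖_∞ ≤ 1 and at most one coordinate of modulus strictly less than 1, such that for every unimodular vector x ∈ ℂ³, if |⟨a, x⟩| > √3 then |⟨v, x⟩| > √3. -/

import Mathlib

open Complex Finset

/-- One-step raising lemma: if `|z| = 1`, `|m| ≤ 1 + s`, `0 ≤ s ≤ 1` and
`√3 ≤ |s·z + m|`, then raising the coefficient `s` to `1` does not decrease the modulus. -/
lemma step_raise (z m : ℂ) (s : ℝ) (h0 : 0 ≤ s) (h1 : s ≤ 1)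
    (hz : ‖z‖ = 1) (hm : ‖m‖ ≤ 1 + s)
    (h3 : Real.sqrt 3 ≤ ‖((s : ℂ) * z + m)‖) :
    ‖((s : ℂ) * z + m)‖ ≤ ‖(z + m)‖ := by
  have hA : (0 : ℝ) ≤ ‖((s : ℂ) * z + m)‖ := (norm_nonneg _)
  have hB : (0 : ℝ) ≤ ‖(z + m)‖ := (norm_nonneg _)
  -- square both sides
  have hsq : Complex.normSq ((s : ℂ) * z + m) ≤ Complex.normSq (z + m) := by
    have hC1 : (3 : ℝ) ≤ Complex.normSq ((s : ℂ) * z + m) := by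
      have := mul_self_le_mul_self (Real.sqrt_nonneg 3) h3
      rw [Real.mul_self_sqrt (by norm_num : (0:ℝ) ≤ 3)] at this
      simpa [Complex.normSq_eq_norm_sq, sq] using this
    have hM : Complex.normSq m ≤ (1 + s) ^ 2 := by
      have := mul_self_le_mul_self (norm_nonneg m) hm
      simpa [Complex.normSq_eq_norm_sq, sq] using this
    have hz2 : Complex.normSq z = 1 := by
      simp [Complex.normSq_eq_norm_sq, hz]
    set R : ℝ := (z * (starRingEnd ℂ) m).re with hR
    have e1 : Complex.normSq (z + m) = 1 + 2 * R + Complex.normSq m := by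
      rw [Complex.normSq_add, hz2]; ring
    have e2 : Complex.normSq ((s : ℂ) * z + m)
        = s ^ 2 + 2 * s * R + Complex.normSq m := by
      rw [Complex.normSq_add, Complex.normSq_mul, Complex.normSq_ofReal, hz2]
      have : (((s : ℂ) * z) * (starRingEnd ℂ) m).re = s * R := by
        rw [hR, mul_assoc, Complex.re_ofReal_mul]
      rw [this]; ring
    rw [e2] at hC1
    rw [e1, e2]
    rcases eq_or_lt_of_le h0 with h0' | h0'
    · exfalso
      rw [← h0'] at hC1 hM
      norm_num at hC1 hM
      linarith
    · have hD : 1 - s - s ^ 2 ≤ s * R := by nlinarith [hC1, hM]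
      nlinarith [mul_nonneg (sub_nonneg.2 h1) (by linarith : (0:ℝ) ≤ s * R - (1 - s - s ^ 2)),
        mul_nonneg (sq_nonneg (1 - s)) (by linarith : (0:ℝ) ≤ 2 + s), h0']
  calc ‖((s : ℂ) * z + m)‖
      = Real.sqrt (Complex.normSq ((s : ℂ) * z + m)) := Complex.norm_def _
    _ ≤ Real.sqrt (Complex.normSq (z + m)) := Real.sqrt_le_sqrt hsq
    _ = ‖(z + m)‖ := (Complex.norm_def _).symm

/-- Raise the first two coefficients to `1`, where the third is minimal. -/
lemma helper_raise (z1 z2 z3 : ℂ) (s1 s2 s3 : ℝ)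
    (h10 : 0 ≤ s1) (h11 : s1 ≤ 1) (h20 : 0 ≤ s2) (h21 : s2 ≤ 1) (h30 : 0 ≤ s3)
    (h31 : s3 ≤ s1) (h32 : s3 ≤ s2)
    (hz1 : ‖z1‖ = 1) (hz2 : ‖z2‖ = 1) (hz3 : ‖z3‖ = 1)
    (h : Real.sqrt 3 < ‖((s1 : ℂ) * z1 + (s2 : ℂ) * z2 + (s3 : ℂ) * z3)‖) :
    Real.sqrt 3 < ‖(z1 + z2 + (s3 : ℂ) * z3)‖ := by
  have hs2 : s2 ≤ 1 := h21
  -- step 1 : raise s1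
  have hm1 : ‖((s2 : ℂ) * z2 + (s3 : ℂ) * z3)‖ ≤ 1 + s1 := by
    calc ‖((s2 : ℂ) * z2 + (s3 : ℂ) * z3)‖
        ≤ ‖((s2 : ℂ) * z2)‖ + ‖((s3 : ℂ) * z3)‖ := norm_add_le _ _
      _ = |s2| + |s3| := by simp [map_mul, hz2, hz3, Complex.norm_real]
      _ ≤ 1 + s1 := by rw [_root_.abs_of_nonneg h20, _root_.abs_of_nonneg h30]; linarith
  have h1' : Real.sqrt 3 < ‖(z1 + ((s2 : ℂ) * z2 + (s3 : ℂ) * z3))‖ := by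
    have e : (s1 : ℂ) * z1 + (s2 : ℂ) * z2 + (s3 : ℂ) * z3
        = (s1 : ℂ) * z1 + ((s2 : ℂ) * z2 + (s3 : ℂ) * z3) := by ring
    rw [e] at h
    exact lt_of_lt_of_le h (step_raise z1 _ s1 h10 h11 hz1 hm1 (le_of_lt h))
  -- step 2 : raise s2
  have hm2 : ‖(z1 + (s3 : ℂ) * z3)‖ ≤ 1 + s2 := by
    calc ‖(z1 + (s3 : ℂ) * z3)‖
        ≤ ‖z1‖ + ‖((s3 : ℂ) * z3)‖ := norm_add_le _ _
      _ = 1 + |s3| := by simp [map_mul, hz1, hz3, Complex.norm_real]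
      _ ≤ 1 + s2 := by rw [_root_.abs_of_nonneg h30]; linarith
  have h2' : Real.sqrt 3 < ‖((s2 : ℂ) * z2 + (z1 + (s3 : ℂ) * z3))‖ := by
    have e : z1 + ((s2 : ℂ) * z2 + (s3 : ℂ) * z3)
        = (s2 : ℂ) * z2 + (z1 + (s3 : ℂ) * z3) := by ring
    rwa [e] at h1'
  have h2'' := lt_of_lt_of_le h2'
    (step_raise z2 _ s2 h20 h21 hz2 hm2 (le_of_lt h2'))
  have e : z2 + (z1 + (s3 : ℂ) * z3) = z1 + z2 + (s3 : ℂ) * z3 := by ring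
  rwa [e] at h2''

/-- For a nonzero `a ∈ ℂ³` with `‖a‖_∞ ≤ 1` there is `v ∈ ℂ³` with `‖v‖_∞ ≤ 1`, at most one
coordinate of modulus `< 1`, such that every unimodular `x` with `|⟨a, x⟩| > √3` also satisfies
`|⟨v, x⟩| > √3`. -/
theorem stmt_13 (a : Fin 3 → ℂ) (ha0 : a ≠ 0) (ha : ∀ i, ‖(a i)‖ ≤ 1) :
    ∃ v : Fin 3 → ℂ, (∀ i, ‖(v i)‖ ≤ 1) ∧
      (∀ i j, ‖(v i)‖ < 1 → ‖(v j)‖ < 1 → i = j) ∧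
      ∀ x : Fin 3 → ℂ, (∀ i, ‖(x i)‖ = 1) →
        Real.sqrt 3 < ‖(∑ i, a i * (starRingEnd ℂ) (x i))‖ →
        Real.sqrt 3 < ‖(∑ i, v i * (starRingEnd ℂ) (x i))‖ := by
  classical
  -- phase of a complex number
  set u : ℂ → ℂ := fun w => if w = 0 then 1 else w / (‖w‖ : ℂ) with hu_def
  have hu1 : ∀ w, ‖(u w)‖ = 1 := by
    intro w
    by_cases hw : w = 0
    · simp [hu_def, hw]
    · have : ‖w‖ ≠ 0 := by simpa using hw
      simp [hu_def, hw, norm_div, Complex.norm_real, _root_.abs_of_nonneg (norm_nonneg w),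
        div_self this]
  have hdecomp : ∀ w : ℂ, w = (‖w‖ : ℂ) * u w := by
    intro w
    by_cases hw : w = 0
    · simp [hu_def, hw]
    · have : (‖w‖ : ℂ) ≠ 0 := by
        simpa using (norm_ne_zero_iff.mpr hw)
      simp only [hu_def, if_neg hw]
      field_simp
  obtain ⟨k, -, hk⟩ := Finset.exists_min_image (univ : Finset (Fin 3))
    (fun i => ‖(a i)‖) ⟨0, mem_univ 0⟩
  have hk' : ∀ i, ‖(a k)‖ ≤ ‖(a i)‖ := fun i => hk i (mem_univ i)
  refine ⟨fun i => if i = k then a k else u (a i), ?_, ?_, ?_⟩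
  · intro i
    by_cases hik : i = k
    · simp [hik, ha k]
    · simp [hik, hu1]
  · intro i j hi hj
    by_cases hik : i = k
    · by_cases hjk : j = k
      · rw [hik, hjk]
      · simp [hjk, hu1] at hj
    · simp [hik, hu1] at hi
  · intro x hx h
    set z : Fin 3 → ℂ := fun i => u (a i) * (starRingEnd ℂ) (x i) with hz_def
    have hz1 : ∀ i, ‖(z i)‖ = 1 := by
      intro i
      simp [hz_def, map_mul, hu1, Complex.norm_conj, hx]
    have hrw : ∀ i, a i * (starRingEnd ℂ) (x i) = ((‖(a i)‖ : ℝ) : ℂ) * z i := by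
      intro i
      conv_lhs => rw [hdecomp (a i)]
      simp [hz_def]; ring
    rw [Fin.sum_univ_three] at h ⊢
    rw [hrw 0, hrw 1, hrw 2] at h
    have ha0' := norm_nonneg (a 0)
    have ha1' := norm_nonneg (a 1)
    have ha2' := norm_nonneg (a 2)
    fin_cases k
    · -- k = 0
      simp only [Fin.zero_eta, Fin.mk_one, Fin.reduceFinMk] at hk' ⊢
      rw [if_pos trivial, if_neg (show ¬(1:Fin 3) = 0 by decide),
        if_neg (show ¬(2:Fin 3) = 0 by decide)]
      have h0 : Real.sqrt 3 < ‖(((‖(a 1)‖ : ℝ) : ℂ) * z 1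
          + ((‖(a 2)‖ : ℝ) : ℂ) * z 2 + ((‖(a 0)‖ : ℝ) : ℂ) * z 0)‖ := by
        have e : ((‖(a 1)‖ : ℝ) : ℂ) * z 1 + ((‖(a 2)‖ : ℝ) : ℂ) * z 2
            + ((‖(a 0)‖ : ℝ) : ℂ) * z 0
            = ((‖(a 0)‖ : ℝ) : ℂ) * z 0 + ((‖(a 1)‖ : ℝ) : ℂ) * z 1
            + ((‖(a 2)‖ : ℝ) : ℂ) * z 2 := by ring
        rwa [e]
      have key := helper_raise (z 1) (z 2) (z 0) _ _ _ ha1' (ha 1) ha2' (ha 2) ha0'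
        (hk' 1) (hk' 2) (hz1 1) (hz1 2) (hz1 0) h0
      have e : a 0 * (starRingEnd ℂ) (x 0) + u (a 1) * (starRingEnd ℂ) (x 1)
          + u (a 2) * (starRingEnd ℂ) (x 2)
          = z 1 + z 2 + ((‖(a 0)‖ : ℝ) : ℂ) * z 0 := by
        rw [hrw 0]; try (simp only [hz_def]; ring)
      rw [e]; exact key
    · -- k = 1
      simp only [Fin.zero_eta, Fin.mk_one, Fin.reduceFinMk] at hk' ⊢
      rw [if_neg (show ¬(0:Fin 3) = 1 by decide), if_pos trivial,
        if_neg (show ¬(2:Fin 3) = 1 by decide)]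
      have h0 : Real.sqrt 3 < ‖(((‖(a 0)‖ : ℝ) : ℂ) * z 0
          + ((‖(a 2)‖ : ℝ) : ℂ) * z 2 + ((‖(a 1)‖ : ℝ) : ℂ) * z 1)‖ := by
        have e : ((‖(a 0)‖ : ℝ) : ℂ) * z 0 + ((‖(a 2)‖ : ℝ) : ℂ) * z 2
            + ((‖(a 1)‖ : ℝ) : ℂ) * z 1
            = ((‖(a 0)‖ : ℝ) : ℂ) * z 0 + ((‖(a 1)‖ : ℝ) : ℂ) * z 1
            + ((‖(a 2)‖ : ℝ) : ℂ) * z 2 := by ring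
        rwa [e]
      have key := helper_raise (z 0) (z 2) (z 1) _ _ _ ha0' (ha 0) ha2' (ha 2) ha1'
        (hk' 0) (hk' 2) (hz1 0) (hz1 2) (hz1 1) h0
      have e : u (a 0) * (starRingEnd ℂ) (x 0) + a 1 * (starRingEnd ℂ) (x 1)
          + u (a 2) * (starRingEnd ℂ) (x 2)
          = z 0 + z 2 + ((‖(a 1)‖ : ℝ) : ℂ) * z 1 := by
        rw [hrw 1]; try (simp only [hz_def]; ring)
      rw [e]; exact key
    · -- k = 2
      simp only [Fin.zero_eta, Fin.mk_one, Fin.reduceFinMk] at hk' ⊢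
      rw [if_neg (show ¬(0:Fin 3) = 2 by decide), if_neg (show ¬(1:Fin 3) = 2 by decide),
        if_pos trivial]
      have key := helper_raise (z 0) (z 1) (z 2) _ _ _ ha0' (ha 0) ha1' (ha 1) ha2'
        (hk' 0) (hk' 1) (hz1 0) (hz1 1) (hz1 2) h
      have e : u (a 0) * (starRingEnd ℂ) (x 0) + u (a 1) * (starRingEnd ℂ) (x 1)
          + a 2 * (starRingEnd ℂ) (x 2)
          = z 0 + z 1 + ((‖(a 2)‖ : ℝ) : ℂ) * z 2 := by
        rw [hrw 2]; try (simp only [hz_def]; ring)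
      rw [e]; exact key
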